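/- Let T be a decision tree over α with cumulative tests, and let L be the decision list whose rules are the leaves of T in lexicographic order, where the body of the rule for leaf ℓ is the positive formula of ℓ and its value is the value carried by ℓ. Then L is total at every x : α, and for every x the value of L at x equals the value returned by evaluating T at x. -/
import Mathlib


/-- A decision tree over a type `α` of examples: a finite binary tree where every
internal node carries a test `Q : α → Prop` and every leaf carries a real value. -/
inductive DTree (α : Type*) where
  | leaf (v : ℝ)
  | node (Q : α → Prop) (l r : DTree α)

namespace DTree

open Classical

variable {α : Type*}

/-- A leaf of the tree is identified by its root-to-leaf path: a list of Booleans,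
`true` meaning "descend to the left child" and `false` "descend to the right child". -/
def IsLeaf : DTree α → List Bool → Prop
  | leaf _, [] => True
  | node _ l _, true :: p => IsLeaf l p
  | node _ _ r, false :: p => IsLeaf r p
  | _, _ => False

/-- The value carried by the leaf at a given path (if any). -/
def leafValue : DTree α → List Bool → Option ℝ
  | leaf v, [] => some v
  | node _ l _, true :: p => leafValue l p
  | node _ _ r, false :: p => leafValue r p
  | _, _ => none

/-- Evaluation of the tree at `x`: starting at the root, at each internal node descend
to the left child if the node's test holds at `x` and to the right child otherwise.
`evalPath T x` is the root-to-leaf path of the leaf thus reached. -/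
noncomputable def evalPath : DTree α → α → List Bool
  | leaf _, _ => []
  | node Q l r, x => if Q x then true :: evalPath l x else false :: evalPath r x

/-- The value returned by evaluating the tree at `x`. -/
noncomputable def evalTree : DTree α → α → ℝ
  | leaf v, _ => v
  | node Q l r, x => if Q x then evalTree l x else evalTree r x

/-- The path formula of the leaf at path `p`, at example `x`: the conjunction, over all
internal nodes on the root-to-leaf path, of the test at `x` when the path exits the node
via its left child, and of the negation of the test when it exits via the right child. -/
def pathFormula : DTree α → List Bool → α → Prop
  | leaf _, [], _ => True
  | node Q l _, true :: p, x => Q x ∧ pathFormula l p x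
  | node Q _ r, false :: p, x => ¬ Q x ∧ pathFormula r p x
  | _, _, _ => False

/-- The positive formula of the leaf at path `p`, at example `x`: the conjunction of the
tests at `x` of those internal nodes on the root-to-leaf path that the path exits via the
left child (the empty conjunction being `True`). -/
def posFormula : DTree α → List Bool → α → Prop
  | leaf _, [], _ => True
  | node Q l _, true :: p, x => Q x ∧ posFormula l p x
  | node _ _ r, false :: p, x => posFormula r p x
  | _, _, _ => False

/-- The subtree rooted at the node reached by following a path from the root. -/
def subtreeAt : DTree α → List Bool → Option (DTree α)
  | t, [] => some t
  | node _ l _, true :: p => subtreeAt l p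
  | node _ _ r, false :: p => subtreeAt r p
  | leaf _, _ :: _ => none

/-- The test carried by the internal node at a given path (if any). -/
def testAt (T : DTree α) (p : List Bool) : Option (α → Prop) :=
  match subtreeAt T p with
  | some (node Q _ _) => some Q
  | _ => none

/-- Leaves are ordered lexicographically: every leaf in the left subtree of an internal
node precedes every leaf in its right subtree.  Concretely, path `p` precedes path `q`
iff after some common prefix, `p` goes left where `q` goes right. -/
def leafLT (p q : List Bool) : Prop :=
  ∃ s p' q' : List Bool, p = s ++ true :: p' ∧ q = s ++ false :: q'

/-- The tree has cumulative tests: for every internal node `n` and every strict ancestor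
`m` of `n` such that the path from `m` to `n` passes through the left child of `m`,
the test of `n` at `x` implies the test of `m` at `x`, for every `x`. -/
def Cumulative (T : DTree α) : Prop :=
  ∀ (p q : List Bool) (Qm Qn : α → Prop),
    testAt T p = some Qm → testAt T (p ++ true :: q) = some Qn →
    ∀ x : α, Qn x → Qm x

theorem isLeaf_evalPath (T : DTree α) (x : α) : IsLeaf T (evalPath T x) := by
  induction T with
  | leaf v => simp [IsLeaf, evalPath]
  | node Q l r hl hr =>
    by_cases h : Q x <;> simp [evalPath, h, IsLeaf, hl, hr]

theorem posFormula_evalPath (T : DTree α) (x : α) : posFormula T (evalPath T x) x := by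
  induction T with
  | leaf v => simp [posFormula, evalPath]
  | node Q l r hl hr =>
    by_cases h : Q x <;> simp [evalPath, h, posFormula, hl, hr]

theorem leafValue_evalPath (T : DTree α) (x : α) :
    leafValue T (evalPath T x) = some (evalTree T x) := by
  induction T with
  | leaf v => simp [leafValue, evalPath, evalTree]
  | node Q l r hl hr =>
    by_cases h : Q x <;> simp [evalPath, h, leafValue, evalTree, hl, hr]

theorem not_evalPath_right (x : α) :
    ∀ (s : List Bool) (T : DTree α) (p' q' : List Bool),
      posFormula T (s ++ true :: p') x → evalPath T x ≠ s ++ false :: q' := by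
  intro s
  induction s with
  | nil =>
    intro T p' q' hp he
    cases T with
    | leaf v => simp [posFormula] at hp
    | node Q l r =>
      obtain ⟨hQ, -⟩ := hp
      rw [evalPath, if_pos hQ] at he
      simp at he
  | cons b s ih =>
    intro T p' q' hp he
    cases T with
    | leaf v => cases b <;> simp [posFormula] at hp
    | node Q l r =>
      cases b with
      | true =>
        simp only [List.cons_append, posFormula] at hp
        obtain ⟨hQ, hp'⟩ := hp
        rw [evalPath, if_pos hQ] at he
        exact ih l p' q' hp' (by injection he)
      | false =>
        simp only [List.cons_append, posFormula] at hp
        rw [evalPath] at he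
        by_cases hQ : Q x
        · rw [if_pos hQ] at he; simp at he
        · rw [if_neg hQ] at he
          exact ih r p' q' hp (by injection he)

end DTree

open DTree in
/-- Let `L` be the decision list whose rules are the leaves of a decision tree `T` with
cumulative tests, taken in lexicographic order, where the body of the rule for leaf `ℓ`
is the positive formula of `ℓ` and its value is the value carried by `ℓ`.  Then `L` is
total at every `x` (some leaf's positive formula holds at `x`), and the value of `L` at
`x` — the value carried by the lexicographically first leaf whose positive formula holds
at `x` — equals the value returned by evaluating `T` at `x`. -/
theorem decision_list_of_tree_total_and_equivalent
    {α : Type*} (T : DTree α) (hT : Cumulative T) :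
    ∀ x : α,
      (∃ ℓ : List Bool, IsLeaf T ℓ ∧ posFormula T ℓ x) ∧
      ∀ ℓ : List Bool, IsLeaf T ℓ → posFormula T ℓ x →
        (∀ ℓ' : List Bool, IsLeaf T ℓ' → posFormula T ℓ' x → ℓ' = ℓ ∨ leafLT ℓ ℓ') →
        leafValue T ℓ = some (evalTree T x) := by
  intro x
  refine ⟨⟨evalPath T x, isLeaf_evalPath T x, posFormula_evalPath T x⟩, ?_⟩
  intro ℓ hleaf hpos hmin
  rcases hmin (evalPath T x) (isLeaf_evalPath T x) (posFormula_evalPath T x) with h | h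
  · rw [← h]; exact leafValue_evalPath T x
  · obtain ⟨s, p', q', hp, hq⟩ := h
    exact absurd hq (not_evalPath_right x s T p' q' (hp ▸ hpos))
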